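/- For every h ∈ ℕ: the word φ(h) starts with the letter h and ends with the letter h+1. Moreover, for every finite word w over {0,…,h}, the number of occurrences of the letter h+1 in φ(w) equals the number of occurrences of the letter h in w, and every occurrence of h+1 in φ(w) is immediately preceded by the letter 0. -/

import Mathlib

/-- S⁻¹: move the last letter of a nonempty word to the front. -/
def sInv (w : List ℕ) : List ℕ := w.rotate (w.length - 1)

/-- Apply a substitution `f` letterwise to a word (the morphism determined by `f`). -/
def applyM (f : ℕ → List ℕ) (w : List ℕ) : List ℕ := (w.map f).flatten

/-- Fuel-indexed approximation of the morphism φ: `phiAux n` agrees with φ on all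
letters `c < n`.  (Computing φ^c(00) only uses φ on letters smaller than `c`, so the
recursion is well-founded in the fuel.) -/
def phiAux : ℕ → ℕ → List ℕ
  | 0, _ => []
  | n + 1, c => sInv ((applyM (phiAux n))^[c] [0, 0]) ++ [c + 1]

/-- The morphism φ on letters: φ(h) = S⁻¹(φ^h(00))·(h+1).
In particular φ(0) = 001 and φ(1) = 1001002. -/
def phi (c : ℕ) : List ℕ := phiAux (c + 1) c

/-- The morphism φ on words. -/
def phiW (w : List ℕ) : List ℕ := applyM phi w

lemma sInv_concat (l : List ℕ) (a : ℕ) : sInv (l ++ [a]) = a :: l := by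
  unfold sInv
  rw [List.length_append, List.length_singleton, Nat.add_sub_cancel,
    List.rotate_eq_drop_append_take (by simp), List.drop_left, List.take_left]
  rfl

lemma applyM_append (f : ℕ → List ℕ) (u v : List ℕ) :
    applyM f (u ++ v) = applyM f u ++ applyM f v := by simp [applyM]

lemma applyM_congr {f g : ℕ → List ℕ} {w : List ℕ} (h : ∀ x ∈ w, f x = g x) :
    applyM f w = applyM g w := by
  unfold applyM; rw [List.map_congr_left h]

lemma mem_applyM {f : ℕ → List ℕ} {w : List ℕ} {x : ℕ} :
    x ∈ applyM f w ↔ ∃ c ∈ w, x ∈ f c := by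
  simp [applyM]

lemma phiW_append (u v : List ℕ) : phiW (u ++ v) = phiW u ++ phiW v :=
  applyM_append _ _ _

lemma phiW_cons (c : ℕ) (w : List ℕ) : phiW (c :: w) = phi c ++ phiW w := by
  simp [phiW, applyM]

lemma phiW_singleton (c : ℕ) : phiW [c] = phi c := by simp [phiW, applyM]

/-- iterates of φ on 00 -/
def itW (c : ℕ) : List ℕ := (phiW)^[c] [0, 0]

lemma phi_struct (c : ℕ) :
    (∀ n, c < n → phiAux n c = phi c) ∧
    ∃ l : List ℕ, phi c = c :: (l ++ [0, c + 1]) ∧ ∀ x ∈ c :: (l ++ [0]), x ≤ c := by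
  induction c using Nat.strong_induction_on with
  | _ c IH =>
    have hlet : ∀ y, y < c → ∀ x ∈ phi y, x ≤ y + 1 := by
      intro y hy x hx
      obtain ⟨l, hl, hb⟩ := (IH y hy).2
      rw [hl] at hx
      simp only [List.mem_cons, List.mem_append] at hx
      rcases hx with rfl | hx | hx
      · omega
      · have := hb x (by simp [hx]); omega
      · simp at hx; omega
    have hit : ∀ k, k ≤ c → (∀ x ∈ itW k, x ≤ k) ∧
        (∀ m, c ≤ m → (applyM (phiAux m))^[k] [0, 0] = itW k) ∧
        (∃ l, itW k = l ++ [0, k]) := by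
      intro k
      induction k with
      | zero =>
        intro _
        refine ⟨?_, ?_, [], rfl⟩ <;> simp [itW]
      | succ k ihk =>
        intro hkc
        have hk : k < c := hkc
        obtain ⟨ha, hb, l, hl⟩ := ihk (le_of_lt hk)
        have hstep : itW (k + 1) = phiW (itW k) := Function.iterate_succ_apply' _ _ _
        refine ⟨?_, ?_, ?_⟩
        · intro x hx
          rw [hstep] at hx
          obtain ⟨y, hy, hxy⟩ := mem_applyM.1 hx
          exact le_trans (hlet y (lt_of_le_of_lt (ha y hy) hk) x hxy)
            (Nat.succ_le_succ (ha y hy))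
        · intro m hm
          rw [Function.iterate_succ_apply', hb m hm, hstep]
          refine applyM_congr fun x hx => ?_
          have hx1 : x < c := lt_of_le_of_lt (ha x hx) hk
          exact (IH x hx1).1 m (by omega)
        · obtain ⟨l', hl', _⟩ := (IH k hk).2
          refine ⟨phiW (l ++ [0]) ++ (k :: l'), ?_⟩
          have h1 : itW (k + 1) = phiW (l ++ [0]) ++ phi k := by
            rw [hstep, hl, show l ++ [0, k] = (l ++ [0]) ++ [k] by simp,
              phiW_append, phiW_singleton]
          rw [h1, hl']
          simp
    obtain ⟨ha, hb, l, hl⟩ := hit c le_rfl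
    have hform : ∀ m, c ≤ m → phiAux (m + 1) c = sInv (itW c) ++ [c + 1] := by
      intro m hm
      show sInv ((applyM (phiAux m))^[c] [0, 0]) ++ [c + 1] = _
      rw [hb m hm]
    have hphi : phi c = sInv (itW c) ++ [c + 1] := hform c le_rfl
    constructor
    · intro n hn
      cases n with
      | zero => omega
      | succ m => rw [hform m (by omega), hphi]
    · refine ⟨l, ?_, ?_⟩
      · have h2 : itW c = (l ++ [0]) ++ [c] := by simp [hl]
        rw [hphi, h2, sInv_concat]
        simp
      · intro x hx
        apply ha x
        rw [hl]
        simp only [List.mem_cons, List.mem_append, List.mem_singleton] at hx ⊢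
        tauto
lemma phi_letters {c x : ℕ} (hx : x ∈ phi c) : x ≤ c + 1 := by
  obtain ⟨l, hl, hb⟩ := (phi_struct c).2
  rw [hl] at hx
  simp only [List.mem_cons, List.mem_append] at hx
  rcases hx with rfl | hx | hx
  · omega
  · have := hb x (by simp [hx]); omega
  · simp at hx; omega

lemma phi_count_of_lt {c h : ℕ} (hc : c < h) : (phi c).count (h + 1) = 0 := by
  refine List.count_eq_zero.2 fun hmem => ?_
  have := phi_letters hmem; omega

lemma phi_count_self (h : ℕ) : (phi h).count (h + 1) = 1 := by
  obtain ⟨l, hl, hb⟩ := (phi_struct h).2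
  have h2 : phi h = (h :: (l ++ [0])) ++ [h + 1] := by rw [hl]; simp
  rw [h2, List.count_append]
  have h3 : (h :: (l ++ [0])).count (h + 1) = 0 := by
    refine List.count_eq_zero.2 fun hmem => ?_
    have := hb _ hmem; omega
  rw [h3]
  simp

lemma phi_block_pos {c h n : ℕ} (hc : c ≤ h) (hn : (phi c)[n]? = some (h + 1)) :
    c = h ∧ 2 ≤ n ∧ n + 1 = (phi c).length ∧ (phi c)[n - 1]? = some 0 := by
  obtain ⟨l, hl, hb⟩ := (phi_struct c).2
  have hmem : h + 1 ∈ phi c := by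
    have h1 : n < (phi c).length := (List.getElem?_eq_some_iff.1 hn).1
    have h2 : (phi c)[n] = h + 1 := by
      have := (List.getElem?_eq_some_iff.1 hn).2; exact this
    exact h2 ▸ List.getElem_mem _
  have hce : c = h := le_antisymm hc (by have := phi_letters hmem; omega)
  subst hce
  have h2 : phi c = (c :: (l ++ [0])) ++ [c + 1] := by rw [hl]; simp
  set L := c :: (l ++ [0]) with hL
  have hLlen : L.length = l.length + 2 := by simp [hL]
  rw [h2] at hn
  have hnL : n = L.length := by
    rcases lt_trichotomy n L.length with h3 | h3 | h3
    · rw [List.getElem?_append_left h3] at hn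
      have : (c + 1) ∈ L := by
        have h4 := (List.getElem?_eq_some_iff.1 hn).2
        exact h4 ▸ List.getElem_mem _
      have := hb _ this; omega
    · exact h3
    · rw [List.getElem?_append_right (le_of_lt h3)] at hn
      have : n - L.length ≥ 1 := by omega
      rw [List.getElem?_eq_none (by simpa using this)] at hn
      exact absurd hn (by simp)
  subst hnL
  refine ⟨rfl, by omega, by simp [h2], ?_⟩
  rw [h2, List.getElem?_append_left (by omega)]
  have hLlast : L = (c :: l) ++ [0] := by simp [hL]
  rw [hLlast, List.getElem?_append_right (by simp [hLlen])]
  simp [hLlen]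

lemma phi_ne_nil (c : ℕ) : 1 ≤ (phi c).length := by
  obtain ⟨l, hl, _⟩ := (phi_struct c).2
  rw [hl]; simp

lemma word_main (h : ℕ) : ∀ w : List ℕ, (∀ c ∈ w, c ≤ h) →
    (phiW w).count (h + 1) = w.count h ∧
    ∀ n, (phiW w)[n]? = some (h + 1) → 0 < n ∧ (phiW w)[n - 1]? = some 0 := by
  intro w
  induction w with
  | nil =>
    intro _
    constructor
    · simp [phiW, applyM]
    · intro n hn; rw [show phiW [] = [] from rfl] at hn; simp at hn
  | cons c w ih =>
    intro hw
    have hch : c ≤ h := hw c (by simp)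
    obtain ⟨ih1, ih2⟩ := ih fun x hx => hw x (by simp [hx])
    rw [phiW_cons]
    constructor
    · rw [List.count_append, ih1, List.count_cons]
      rcases eq_or_lt_of_le hch with rfl | hlt
      · rw [phi_count_self]; simp only [beq_self_eq_true, if_true]; omega
      · rw [phi_count_of_lt hlt]; simp; omega
    · intro n hn
      by_cases h3 : n < (phi c).length
      · rw [List.getElem?_append_left h3] at hn
        obtain ⟨_, h4, h5, h6⟩ := phi_block_pos hch hn
        refine ⟨by omega, ?_⟩
        rw [List.getElem?_append_left (by omega)]
        exact h6
      · push_neg at h3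
        rw [List.getElem?_append_right h3] at hn
        obtain ⟨h4, h5⟩ := ih2 _ hn
        have h6 : 1 ≤ (phi c).length := phi_ne_nil c
        refine ⟨by omega, ?_⟩
        rw [List.getElem?_append_right (by omega),
          show n - 1 - (phi c).length = n - (phi c).length - 1 by omega]
        exact h5


/-- For every h: φ(h) starts with h and ends with h+1; moreover for every word w over
{0,…,h}, the number of occurrences of h+1 in φ(w) equals the number of occurrences of
h in w, and every occurrence of h+1 in φ(w) is immediately preceded by a 0. -/
theorem phi_form (h : ℕ) :
    (phi h).head? = some h ∧ (phi h).getLast? = some (h + 1) ∧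
    ∀ w : List ℕ, (∀ c ∈ w, c ≤ h) →
      (phiW w).count (h + 1) = w.count h ∧
      ∀ n, (phiW w)[n]? = some (h + 1) → 0 < n ∧ (phiW w)[n - 1]? = some 0 := by
  obtain ⟨l, hl, _⟩ := (phi_struct h).2
  refine ⟨by rw [hl]; rfl, ?_, word_main h⟩
  rw [hl, show h :: (l ++ [0, h + 1]) = (h :: (l ++ [0])) ++ [h + 1] by simp,
    List.getLast?_concat]
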